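/- Let N, K, s be positive integers with s = (N/K)·log(1/ε) for some ε ∈ (0,1), and let S*, S be subsets of a ground set V of size N with |S* \ S| ≤ K. If R is a uniformly random subset of V \ S of size s, then Pr[R ∩ (S* \ S) ≠ ∅] ≥ (1-ε)·|S* \ S|/K. -/

import Mathlib

open Finset Real

lemma desc_aux (s n k : ℕ) (hkn : k ≤ n) :
    (n - k).descFactorial s * n ^ s ≤ n.descFactorial s * (n - k) ^ s := by
  rw [Nat.descFactorial_eq_prod_range, Nat.descFactorial_eq_prod_range,
    pow_eq_prod_const, pow_eq_prod_const, ← Finset.prod_mul_distrib,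
    ← Finset.prod_mul_distrib]
  apply Finset.prod_le_prod' (fun i _ => ?_)
  rcases le_or_gt (k + i) n with h | h
  · zify [hkn, (by omega : i ≤ n), (by omega : i ≤ n - k)]
    nlinarith [mul_nonneg (Int.ofNat_nonneg i) (Int.ofNat_nonneg k)]
  · have h0 : n - k - i = 0 := by omega
    simp [h0]

lemma choose_aux (s n k : ℕ) (hkn : k ≤ n) :
    (n - k).choose s * n ^ s ≤ n.choose s * (n - k) ^ s := by
  have h := desc_aux s n k hkn
  rw [Nat.descFactorial_eq_factorial_mul_choose, Nat.descFactorial_eq_factorial_mul_choose,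
    mul_assoc, mul_assoc] at h
  exact Nat.le_of_mul_le_mul_left h (Nat.factorial_pos s)

/-- Sampling lemma: a uniformly random `s`-subset `R` of `V \ S` hits `S* \ S`
with probability at least `(1-ε)·|S* \ S|/K`, where `s = (N/K)·log(1/ε)`.
The probability is expressed as the ratio of the number of favorable `s`-subsets
to the total number of `s`-subsets of `V \ S`. -/
theorem stmt_2 {α : Type*} [DecidableEq α] (V Sstar S : Finset α)
    (N K s : ℕ) (hN : 0 < N) (hK : 0 < K) (hs : 0 < s)
    (hVN : V.card = N) (hSstar : Sstar ⊆ V) (hS : S ⊆ V)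
    (hdK : (Sstar \ S).card ≤ K)
    (ε : ℝ) (hε : ε ∈ Set.Ioo (0:ℝ) 1)
    (hsval : (s : ℝ) = ((N : ℝ) / K) * Real.log (1 / ε))
    (hsle : s ≤ (V \ S).card) :
    ((((V \ S).powersetCard s).filter (fun R => (R ∩ (Sstar \ S)).Nonempty)).card : ℝ) /
        (((V \ S).powersetCard s).card : ℝ)
      ≥ (1 - ε) * ((Sstar \ S).card : ℝ) / K := by
  obtain ⟨hε0, hε1⟩ := hε
  set A := V \ S with hA
  set D := Sstar \ S with hD
  have hDA : D ⊆ A := Finset.sdiff_subset_sdiff hSstar (Finset.Subset.refl S)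
  set n := A.card with hn
  set k := D.card with hk
  have hkn : k ≤ n := Finset.card_le_card hDA
  have hnN : n ≤ N := hVN ▸ Finset.card_le_card (Finset.sdiff_subset)
  have hsn : s ≤ n := hsle
  have hn0 : 0 < n := lt_of_lt_of_le hs hsn
  have hN0 : (0:ℝ) < N := by exact_mod_cast hN
  have hK0 : (0:ℝ) < K := by exact_mod_cast hK
  have hnR : (0:ℝ) < n := by exact_mod_cast hn0
  -- counting
  have htotal : (A.powersetCard s).card = n.choose s := Finset.card_powersetCard s A
  have hmiss : ((A.powersetCard s).filter (fun R => ¬ (R ∩ D).Nonempty)).card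
      = (n - k).choose s := by
    have heq : (A.powersetCard s).filter (fun R => ¬ (R ∩ D).Nonempty)
        = (A \ D).powersetCard s := by
      ext R
      simp only [Finset.mem_filter, Finset.mem_powersetCard, Finset.not_nonempty_iff_eq_empty,
        ← Finset.disjoint_iff_inter_eq_empty, Finset.subset_sdiff]
      tauto
    rw [heq, Finset.card_powersetCard, Finset.card_sdiff_of_subset hDA]
  have hchle : (n - k).choose s ≤ n.choose s := Nat.choose_le_choose s (Nat.sub_le n k)
  have hhit : ((A.powersetCard s).filter (fun R => (R ∩ D).Nonempty)).card
      = n.choose s - (n - k).choose s := by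
    have h := Finset.card_filter_add_card_filter_not
      (s := A.powersetCard s) (p := fun R => (R ∩ D).Nonempty)
    rw [hmiss, htotal] at h
    omega
  have hCpos : (0:ℝ) < (n.choose s : ℝ) := by exact_mod_cast Nat.choose_pos hsn
  -- ratio bound
  have hcast : ((n - k).choose s : ℝ) * (n:ℝ) ^ s
      ≤ (n.choose s : ℝ) * ((n:ℝ) - k) ^ s := by
    have := choose_aux s n k hkn
    have h2 : (((n - k).choose s * n ^ s : ℕ) : ℝ) ≤ ((n.choose s * (n - k) ^ s : ℕ) : ℝ) := by
      exact_mod_cast this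
    push_cast [Nat.cast_sub hkn] at h2
    exact h2
  have hq1 : ((n - k).choose s : ℝ) ≤ (n.choose s : ℝ) * (((n:ℝ) - k) / n) ^ s := by
    rw [div_pow]
    rw [← mul_div_assoc, le_div_iff₀ (by positivity)]
    linarith
  have hkn' : (k:ℝ) ≤ (n:ℝ) := by exact_mod_cast hkn
  have hq2 : (((n:ℝ) - k) / n) ^ s ≤ Real.exp (-(((s:ℝ) * k) / n)) := by
    have e1 : ((n:ℝ) - k) / n ≤ Real.exp (-((k:ℝ) / n)) := by
      have h := Real.add_one_le_exp (-((k:ℝ) / n))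
      have e2 : ((n:ℝ) - k) / n = 1 - (k:ℝ)/n := by field_simp
      linarith
    have nonneg : 0 ≤ ((n:ℝ) - k) / n := div_nonneg (by linarith) hnR.le
    calc (((n:ℝ) - k) / n) ^ s ≤ (Real.exp (-((k:ℝ) / n))) ^ s :=
          pow_le_pow_left₀ nonneg e1 s
      _ = Real.exp ((s:ℝ) * (-((k:ℝ) / n))) := (Real.exp_nat_mul _ s).symm
      _ = Real.exp (-(((s:ℝ) * k) / n)) := by ring_nf
  have hq3 : Real.exp (-(((s:ℝ) * k) / n)) ≤ Real.exp (-(((s:ℝ) * k) / N)) := by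
    apply Real.exp_le_exp.2
    have : ((s:ℝ) * k) / N ≤ ((s:ℝ) * k) / n := by
      apply div_le_div_of_nonneg_left (by positivity) hnR
      exact_mod_cast hnN
    linarith
  have hq : ((n - k).choose s : ℝ) / (n.choose s : ℝ) ≤ Real.exp (-(((s:ℝ) * k) / N)) := by
    rw [div_le_iff₀ hCpos]
    calc ((n - k).choose s : ℝ) ≤ (n.choose s : ℝ) * (((n:ℝ) - k) / n) ^ s := hq1
      _ ≤ (n.choose s : ℝ) * Real.exp (-(((s:ℝ) * k) / N)) := by
          apply mul_le_mul_of_nonneg_left (le_trans hq2 hq3) hCpos.le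
      _ = Real.exp (-(((s:ℝ) * k) / N)) * (n.choose s : ℝ) := mul_comm _ _
  -- convexity / exp part
  have hcK : Real.exp (-(((s:ℝ) * K) / N)) = ε := by
    have harg : -(((s:ℝ) * K) / N) = Real.log ε := by
      rw [hsval, one_div, Real.log_inv]
      field_simp
    rw [harg, Real.exp_log hε0]
  set lam : ℝ := (k:ℝ) / K with hlam
  have hlam0 : 0 ≤ lam := div_nonneg (Nat.cast_nonneg _) hK0.le
  have hlam1 : lam ≤ 1 := by
    rw [hlam, div_le_one hK0]
    exact_mod_cast hdK
  have hconv := convexOn_exp.2 (Set.mem_univ (-(((s:ℝ) * K) / N))) (Set.mem_univ (0:ℝ))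
    hlam0 (by linarith : (0:ℝ) ≤ 1 - lam) (by ring)
  simp only [smul_eq_mul, mul_zero, add_zero, Real.exp_zero, mul_one] at hconv
  have hargeq : lam * (-(((s:ℝ) * K) / N)) = -(((s:ℝ) * k) / N) := by
    rw [hlam]; field_simp
  rw [hargeq, hcK] at hconv
  -- combine
  have hE : 1 - Real.exp (-(((s:ℝ) * k) / N)) ≥ (1 - ε) * (k:ℝ) / K := by
    have hr : (1 - ε) * (k:ℝ) / K = lam - lam * ε := by rw [hlam]; ring
    linarith
  rw [hhit, htotal]
  rw [ge_iff_le, le_div_iff₀ hCpos]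
  push_cast [Nat.cast_sub hchle]
  have hq' : ((n - k).choose s : ℝ) ≤ Real.exp (-(((s:ℝ) * k) / N)) * (n.choose s : ℝ) := by
    rw [← div_le_iff₀ hCpos]; exact hq
  nlinarith [hE, hCpos, hq']
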